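/- Let G be a group acting on a set X and let a₁, a₂ be elements of G. Suppose there exist pairwise disjoint nonempty subsets A₁, B₁, A₂, B₂ of X such that aᵢ(X \ Aᵢ) ⊆ Bᵢ for i = 1, 2. Then a₁ and a₂ generate a free group of rank 2. -/

import Mathlib

/-- Ping-pong lemma: if `a₁, a₂` act on `X` with pairwise disjoint nonempty sets
`A₁, B₁, A₂, B₂` such that `aᵢ (X \ Aᵢ) ⊆ Bᵢ`, then `a₁, a₂` generate a free
group of rank 2. -/
theorem stmt0 {G X : Type*} [Group G] [MulAction G X]
    (a₁ a₂ : G) (A₁ B₁ A₂ B₂ : Set X)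
    (hne₁ : A₁.Nonempty) (hne₂ : B₁.Nonempty) (hne₃ : A₂.Nonempty) (hne₄ : B₂.Nonempty)
    (h₁₂ : Disjoint A₁ B₁) (h₁₃ : Disjoint A₁ A₂) (h₁₄ : Disjoint A₁ B₂)
    (h₂₃ : Disjoint B₁ A₂) (h₂₄ : Disjoint B₁ B₂) (h₃₄ : Disjoint A₂ B₂)
    (ha₁ : ∀ x : X, x ∉ A₁ → a₁ • x ∈ B₁)
    (ha₂ : ∀ x : X, x ∉ A₂ → a₂ • x ∈ B₂) :
    Function.Injective ⇑(FreeGroup.lift (fun i : Fin 2 => if i = 0 then a₁ else a₂)) := by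
  set a : Fin 2 → G := fun i => if i = 0 then a₁ else a₂ with ha
  set a' : ULift.{_,0} (Fin 2) → G := fun i => a i.down with ha'
  set Xs : ULift.{_,0} (Fin 2) → Set X := fun i => if i.down = 0 then B₁ else B₂ with hXs
  set Ys : ULift.{_,0} (Fin 2) → Set X := fun i => if i.down = 0 then A₁ else A₂ with hYs
  have key2 : ∀ i : Fin 2, i = 0 ∨ i = 1 := by decide
  have key : ∀ i : ULift.{_,0} (Fin 2), i = ⟨0⟩ ∨ i = ⟨1⟩ := by
    rintro ⟨i⟩
    rcases key2 i with rfl | rfl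
    · exact Or.inl rfl
    · exact Or.inr rfl
  have ha'0 : a' ⟨0⟩ = a₁ := by simp [ha', ha]
  have ha'1 : a' ⟨1⟩ = a₂ := by simp [ha', ha]
  have hX0 : Xs ⟨0⟩ = B₁ := by simp [hXs]
  have hX1 : Xs ⟨1⟩ = B₂ := by simp [hXs]
  have hY0 : Ys ⟨0⟩ = A₁ := by simp [hYs]
  have hY1 : Ys ⟨1⟩ = A₂ := by simp [hYs]
  have hinj : Function.Injective ⇑(FreeGroup.lift a') := by
    apply FreeGroup.injective_lift_of_ping_pong a' Xs Ys
    · intro i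
      rcases key i with rfl | rfl <;> simp_all
    · intro i j hij
      rcases key i with rfl | rfl <;> rcases key j with rfl | rfl <;>
        simp_all [Function.onFun] <;> first | exact h₂₄ | exact h₂₄.symm
    · intro i j hij
      rcases key i with rfl | rfl <;> rcases key j with rfl | rfl <;>
        simp_all [Function.onFun] <;> first | exact h₁₃ | exact h₁₃.symm
    · intro i j
      rcases key i with rfl | rfl <;> rcases key j with rfl | rfl <;>
        simp_all <;>
        first | exact h₁₂.symm | exact h₂₃ | exact h₁₄.symm | exact h₃₄.symm
    · intro i
      rcases key i with rfl | rfl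
      · rw [ha'0, hX0, hY0]
        rintro y ⟨x, hx, rfl⟩
        exact ha₁ x hx
      · rw [ha'1, hX1, hY1]
        rintro y ⟨x, hx, rfl⟩
        exact ha₂ x hx
    · intro i
      rcases key i with rfl | rfl
      · rw [hX0, hY0]
        rintro y ⟨x, hx, rfl⟩
        simp only [Pi.inv_apply, ha'0, Set.mem_compl_iff] at hx ⊢
        by_contra h
        exact hx (by simpa using ha₁ _ h)
      · rw [hX1, hY1]
        rintro y ⟨x, hx, rfl⟩
        simp only [Pi.inv_apply, ha'1, Set.mem_compl_iff] at hx ⊢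
        by_contra h
        exact hx (by simpa using ha₂ _ h)
  have heq : ⇑(FreeGroup.lift a) =
      ⇑(FreeGroup.lift a') ∘
        ⇑(FreeGroup.freeGroupCongr (Equiv.ulift.{_,0}.symm : Fin 2 ≃ ULift (Fin 2))) := by
    ext x
    simp only [Function.comp_apply]
    induction x using FreeGroup.induction_on with
    | C1 => simp
    | of i =>
      show (FreeGroup.lift a) (FreeGroup.of i) =
        (FreeGroup.lift a') ((FreeGroup.freeGroupCongr _) (FreeGroup.of i))
      simp [ha']
    | inv_of i h => simp_all
    | mul x y hx hy => simp_all
  rw [heq]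
  exact hinj.comp (FreeGroup.freeGroupCongr _).injective
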